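/- Autonomous corollary: Let f : U → U be C¹ with V ∘ f = V for a C² function V : U → ℝ≥0 with V⁻¹(0) compact nonempty; suppose there are b, ε > 0 with V⁻¹([0,ε]) compact and ‖∇V‖² ≥ bV on V⁻¹([0,ε]), and δ > 0 with S_δ ⊆ U. Then for 0 < α < min(2/d, δ/L) (L, d as in the main theorem), any sequence x̃_{k+1} = f(x̃_k) - α∇V(f(x̃_k)) starting in V⁻¹([0,ε]) satisfies V(x̃_k) → 0 exponentially fast, with rate factor (1 - b(α - α²d/2)) per step. -/

import Mathlib

open Metric Set

lemma taylor_descent {E : Type*} [NormedAddCommGroup E] [NormedSpace ℝ E]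
    (V : E → ℝ) (S : Set E) (hSo : IsOpen S) (hV : ContDiffOn ℝ 2 V S)
    (d : ℝ) (hd : ∀ x ∈ S, ∀ v : E, v ≠ 0 → iteratedFDeriv ℝ 2 V x ![v, v] < d * ‖v‖ ^ 2)
    (y w : E) (hw : w ≠ 0) (hseg : ∀ t : ℝ, t ∈ Icc (0:ℝ) 1 → y + t • w ∈ S) :
    V (y + w) ≤ V y + fderiv ℝ V y w + d * ‖w‖ ^ 2 / 2 := by
  set γ : ℝ → E := fun t => y + t • w with hγ
  have hγd : ∀ t : ℝ, HasDerivAt γ w t := by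
    intro t
    have := ((hasDerivAt_id t).smul_const w).const_add y
    simp only [one_smul] at this
    exact this
  have hVd : DifferentiableOn ℝ V S := hV.differentiableOn (by norm_num)
  have h2 : ContDiffOn ℝ (1 + 1 : ℕ) V S := by exact_mod_cast hV
  have hV1 : ContDiffOn ℝ 1 (fderiv ℝ V) S := by
    have := (contDiffOn_succ_iff_fderiv_of_isOpen (n := 1) hSo).mp (by exact_mod_cast hV)
    exact this.2.2
  have hfdd : DifferentiableOn ℝ (fderiv ℝ V) S := hV1.differentiableOn one_ne_zero
  set φ : ℝ → ℝ := fun t => V (γ t) with hφdef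
  set φ' : ℝ → ℝ := fun t => fderiv ℝ V (γ t) w with hφ'def
  set φ'' : ℝ → ℝ := fun t => fderiv ℝ (fderiv ℝ V) (γ t) w w with hφ''def
  have hmemS : ∀ t ∈ Icc (0:ℝ) 1, γ t ∈ S := hseg
  have hφ : ∀ t ∈ Icc (0:ℝ) 1, HasDerivAt φ (φ' t) t := by
    intro t ht
    have hVt : DifferentiableAt ℝ V (γ t) :=
      hVd.differentiableAt (hSo.mem_nhds (hmemS t ht))
    exact hVt.hasFDerivAt.comp_hasDerivAt t (hγd t)
  have hφ' : ∀ t ∈ Icc (0:ℝ) 1, HasDerivAt φ' (φ'' t) t := by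
    intro t ht
    have hB : DifferentiableAt ℝ (fderiv ℝ V) (γ t) :=
      hfdd.differentiableAt (hSo.mem_nhds (hmemS t ht))
    have h1 := (ContinuousLinearMap.apply ℝ ℝ w).hasFDerivAt.comp (γ t) hB.hasFDerivAt
    have h2 := h1.comp_hasDerivAt t (hγd t)
    exact h2
  have hbound : ∀ t ∈ Icc (0:ℝ) 1, φ'' t < d * ‖w‖ ^ 2 := by
    intro t ht
    have := hd (γ t) (hmemS t ht) w hw
    rwa [iteratedFDeriv_two_apply] at this
  set M : ℝ := d * ‖w‖ ^ 2 with hM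
  set h : ℝ → ℝ := fun t => φ t - φ 0 - t * φ' 0 - M * t ^ 2 / 2 with hh
  set h' : ℝ → ℝ := fun t => φ' t - φ' 0 - M * t with hh'
  have hhd : ∀ t ∈ Icc (0:ℝ) 1, HasDerivAt h (h' t) t := by
    intro t ht
    have a1 : HasDerivAt (fun t : ℝ => t * φ' 0) (φ' 0) t := by
      simpa using (hasDerivAt_id t).mul_const (φ' 0)
    have a2 : HasDerivAt (fun t : ℝ => M * t ^ 2 / 2) (M * t) t := by
      have := ((hasDerivAt_pow 2 t).const_mul M).div_const 2
      exact this.congr_deriv (by rw [Nat.cast_ofNat, show (2:ℕ) - 1 = 1 from rfl, pow_one]; ring)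
    exact (((hφ t ht).sub_const (φ 0)).sub a1).sub a2
  obtain ⟨c, hc, hceq⟩ := exists_hasDerivAt_eq_slope h h' zero_lt_one
    (fun t ht => (hhd t ht).continuousAt.continuousWithinAt)
    (fun t ht => hhd t (Ioo_subset_Icc_self ht))
  have hcI : Icc (0:ℝ) c ⊆ Icc (0:ℝ) 1 := Icc_subset_Icc le_rfl hc.2.le
  obtain ⟨ξ, hξ, hξeq⟩ := exists_hasDerivAt_eq_slope φ' φ'' hc.1
    (fun t ht => (hφ' t (hcI ht)).continuousAt.continuousWithinAt)
    (fun t ht => hφ' t (hcI (Ioo_subset_Icc_self ht)))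
  have hξI : ξ ∈ Icc (0:ℝ) 1 := ⟨hξ.1.le, hξ.2.le.trans hc.2.le⟩
  have hbξ : φ'' ξ ≤ M := (hbound ξ hξI).le
  have e1 : φ'' ξ * (c - 0) = φ' c - φ' 0 := (eq_div_iff (by linarith [hc.1] : c - 0 ≠ 0)).mp hξeq
  have hc0 : h' c ≤ 0 := by
    have : φ'' ξ * c ≤ M * c := mul_le_mul_of_nonneg_right hbξ hc.1.le
    simp only [hh']
    linarith
  have h10 : h 1 - h 0 = h' c := by
    rw [hceq]; ring
  have h0 : h 0 = 0 := by simp [hh]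
  have h1le : h 1 ≤ 0 := by linarith
  have hφ1 : φ 1 = V (y + w) := by simp [hφdef, hγ]
  have hφ0 : φ 0 = V y := by simp [hφdef, hγ]
  have hφ'0 : φ' 0 = fderiv ℝ V y w := by simp [hφ'def, hγ]
  simp only [hh, hφ1, hφ0, hφ'0, one_mul, one_pow, mul_one] at h1le
  linarith

set_option maxHeartbeats 1000000 in
/-- Autonomous corollary of the main theorem: for `f : U → U` with `V ∘ f = V`,
the modified trajectory `x̃_{k+1} = f(x̃_k) - α∇V(f(x̃_k))` starting in
`V⁻¹([0,ε])` satisfies `V(x̃_k) ≤ (1 - b(α - α²d/2))^k V(x̃_0)`. -/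
theorem discrete_extension_autonomous
    {n : ℕ} (U : Set (EuclideanSpace ℝ (Fin n)))
    (f : EuclideanSpace ℝ (Fin n) → EuclideanSpace ℝ (Fin n))
    (hf : ContDiffOn ℝ 1 f U) (hfmaps : ∀ x ∈ U, f x ∈ U)
    (V : EuclideanSpace ℝ (Fin n) → ℝ) (hV : ContDiffOn ℝ 2 V U)
    (hVnn : ∀ x ∈ U, 0 ≤ V x)
    (hzero_cpt : IsCompact {x ∈ U | V x = 0}) (hzero_ne : {x ∈ U | V x = 0}.Nonempty)
    (hinv : ∀ x ∈ U, V (f x) = V x)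
    (b ε : ℝ) (hb : 0 < b) (hε : 0 < ε)
    (K : Set (EuclideanSpace ℝ (Fin n))) (hK : K = {x ∈ U | V x ≤ ε})
    (hKc : IsCompact K)
    (hgrad : ∀ x ∈ K, b * V x ≤ ‖gradient V x‖ ^ 2)
    (δ : ℝ) (hδ : 0 < δ)
    (Sδ : Set (EuclideanSpace ℝ (Fin n))) (hSδ : Sδ = {x | Metric.infDist x K < δ})
    (hSδU : Sδ ⊆ U)
    (L : ℝ) (hLpos : 0 < L) (hL : IsGreatest ((fun x => ‖gradient V x‖) '' K) L)
    (d : ℝ) (hdpos : 0 < d)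
    (hd : ∀ x ∈ Sδ, ∀ v : EuclideanSpace ℝ (Fin n), v ≠ 0 →
      iteratedFDeriv ℝ 2 V x ![v, v] < d * ‖v‖ ^ 2)
    (α : ℝ) (hα : 0 < α) (hα2 : α < 2 / d) (hα3 : α < δ / L)
    (xt : ℕ → EuclideanSpace ℝ (Fin n)) (hx0 : xt 0 ∈ K)
    (hstep : ∀ k, xt (k + 1) = f (xt k) - α • gradient V (f (xt k))) :
    ∀ k, V (xt k) ≤ (1 - b * (α - α ^ 2 * d / 2)) ^ k * V (xt 0) := by
  set c : ℝ := 1 - b * (α - α ^ 2 * d / 2) with hc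
  have hSo : IsOpen Sδ := by
    rw [hSδ]; exact isOpen_lt (continuous_infDist_pt K) continuous_const
  have hKU : K ⊆ U := by rw [hK]; exact fun x hx => hx.1
  have hKS : K ⊆ Sδ := by
    intro x hx
    rw [hSδ]
    simpa [infDist_zero_of_mem hx] using hδ
  have hVS : ContDiffOn ℝ 2 V Sδ := hV.mono hSδU
  have hLbd : ∀ x ∈ K, ‖gradient V x‖ ≤ L := fun x hx => hL.2 ⟨x, hx, rfl⟩
  have hαL : α * L < δ := by
    rw [lt_div_iff₀ hLpos] at hα3; exact hα3
  have hαd : α * d < 2 := by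
    rw [lt_div_iff₀ hdpos] at hα2; exact hα2
  have hpos : 0 < α - α ^ 2 * d / 2 := by nlinarith
  -- key descent step
  have key : ∀ y ∈ K, V (y - α • gradient V y) ≤ c * V y ∧ (y - α • gradient V y) ∈ K := by
    intro y hy
    set g := gradient V y with hg
    have hVy : 0 ≤ V y := hVnn y (hKU hy)
    have hVyε : V y ≤ ε := by rw [hK] at hy; exact hy.2
    by_cases hg0 : g = 0
    · have hVy0 : V y = 0 := by
        have := hgrad y hy
        rw [← hg, hg0] at this
        simp at this
        nlinarith
      rw [hg0]
      constructor
      · simp [hVy0]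
      · simpa using hy
    · set w : EuclideanSpace ℝ (Fin n) := -(α • g) with hw
      have hwne : w ≠ 0 := by
        simp only [hw, neg_ne_zero, smul_ne_zero_iff]
        exact ⟨ne_of_gt hα, hg0⟩
      have hwnorm : ‖w‖ = α * ‖g‖ := by
        rw [hw, norm_neg, norm_smul, Real.norm_eq_abs, abs_of_pos hα]
      have hseg : ∀ t : ℝ, t ∈ Icc (0:ℝ) 1 → y + t • w ∈ Sδ := by
        intro t ht
        rw [hSδ]
        have h1 : infDist (y + t • w) K ≤ dist (y + t • w) y := infDist_le_dist_of_mem hy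
        have h2 : dist (y + t • w) y = ‖t • w‖ := by
          rw [dist_eq_norm]; congr 1; abel
        have h3 : ‖t • w‖ ≤ ‖w‖ := by
          rw [norm_smul, Real.norm_eq_abs, abs_of_nonneg ht.1]
          nlinarith [norm_nonneg w, ht.2]
        have h4 : ‖w‖ < δ := by
          rw [hwnorm]
          calc α * ‖g‖ ≤ α * L := by
                have := hLbd y hy; rw [← hg] at this; nlinarith
            _ < δ := hαL
        simp only [Set.mem_setOf_eq]
        linarith
      have htay := taylor_descent V Sδ hSo hVS d hd y w hwne hseg
      have hfg : fderiv ℝ V y w = -(α * ‖g‖ ^ 2) := by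
        have hfg1 : fderiv ℝ V y w = inner ℝ g w := by
          rw [hg, gradient, InnerProductSpace.toDual_symm_apply]
        rw [hfg1, hw, inner_neg_right, inner_smul_right, real_inner_self_eq_norm_sq]
      rw [hfg, hwnorm] at htay
      have hgr := hgrad y hy
      rw [← hg] at hgr
      have hVnew : V (y + w) ≤ c * V y := by
        have hstep1 : V (y + w) ≤ V y - (α - α ^ 2 * d / 2) * ‖g‖ ^ 2 := by nlinarith
        have hstep2 : (α - α ^ 2 * d / 2) * (b * V y) ≤ (α - α ^ 2 * d / 2) * ‖g‖ ^ 2 :=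
          mul_le_mul_of_nonneg_left hgr hpos.le
        rw [hc]; nlinarith
      have heq : y - α • g = y + w := by rw [hw]; abel
      rw [heq]
      refine ⟨hVnew, ?_⟩
      have hmem : y + w ∈ Sδ := by
        have := hseg 1 ⟨zero_le_one, le_rfl⟩
        rwa [one_smul] at this
      rw [hK]
      refine ⟨hSδU hmem, ?_⟩
      have : c * V y ≤ V y := by
        rw [hc]; nlinarith [mul_nonneg (mul_nonneg hb.le hpos.le) hVy]
      linarith
  -- induction
  by_cases hcnn : 0 ≤ c
  · have main : ∀ k, xt k ∈ K ∧ V (xt k) ≤ c ^ k * V (xt 0) := by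
      intro k
      induction k with
      | zero => exact ⟨hx0, by simp⟩
      | succ k ih =>
        obtain ⟨hkK, hkV⟩ := ih
        have hyU : f (xt k) ∈ U := hfmaps _ (hKU hkK)
        have hyK : f (xt k) ∈ K := by
          rw [hK]
          exact ⟨hyU, by rw [hinv _ (hKU hkK)]; rw [hK] at hkK; exact hkK.2⟩
        obtain ⟨h1, h2⟩ := key _ hyK
        rw [← hstep k] at h1 h2
        refine ⟨h2, ?_⟩
        calc V (xt (k + 1)) ≤ c * V (f (xt k)) := h1
          _ = c * V (xt k) := by rw [hinv _ (hKU hkK)]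
          _ ≤ c * (c ^ k * V (xt 0)) := mul_le_mul_of_nonneg_left hkV hcnn
          _ = c ^ (k + 1) * V (xt 0) := by ring
    exact fun k => (main k).2
  · push_neg at hcnn
    have hzeroK : ∀ y ∈ K, V y = 0 := by
      intro y hy
      by_contra hne
      have hVy : 0 < V y := lt_of_le_of_ne (hVnn y (hKU hy)) (Ne.symm hne)
      obtain ⟨h1, h2⟩ := key y hy
      have : 0 ≤ V (y - α • gradient V y) := hVnn _ (hKU h2)
      nlinarith
    have main : ∀ k, xt k ∈ K := by
      intro k
      induction k with
      | zero => exact hx0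
      | succ k ih =>
        have hyK : f (xt k) ∈ K := by
          rw [hK]
          exact ⟨hfmaps _ (hKU ih), by rw [hinv _ (hKU ih)]; rw [hK] at ih; exact ih.2⟩
        have := (key _ hyK).2
        rwa [← hstep k] at this
    intro k
    rw [hzeroK _ (main k), hzeroK _ hx0]
    simp
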